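/- Let R be a finite-dimensional binary alternating algebra with Ann(R) = R² (primitive), R = V ⊕ R² with dim V = m and dim R² = d. Then 1 + (m mod 2) ≤ d ≤ m(m−1)/2; in particular, if m is odd then d ≥ 2. -/

import Mathlib

lemma no_fpf_involution {n : ℕ} (hn : n % 2 = 1) (σ : Equiv.Perm (Fin n))
    (hinv : σ⁻¹ = σ) (hfp : ∀ i, σ i ≠ i) : False := by
  have hsum : ∑ _i : Fin n, (1 : ZMod 2) = 0 := by
    apply Finset.sum_involution (g := fun i _ => σ i)
    · intro a _; decide
    · intro a _ _; exact hfp a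
    · intro a _; exact Finset.mem_univ _
    · intro a _
      calc σ (σ a) = σ⁻¹ (σ a) := by rw [hinv]
        _ = a := Equiv.symm_apply_apply σ a
  rw [Finset.sum_const, Finset.card_univ, Fintype.card_fin, nsmul_eq_mul, mul_one] at hsum
  have := (ZMod.natCast_eq_zero_iff n 2).1 hsum
  omega

lemma det_symm_zero_diag {n : ℕ} (hn : n % 2 = 1) (M : Matrix (Fin n) (Fin n) (ZMod 2))
    (hsymm : ∀ i j, M i j = M j i) (hdiag : ∀ i, M i i = 0) : M.det = 0 := by
  rw [Matrix.det_apply']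
  have hε : ∀ σ : Equiv.Perm (Fin n), ((Equiv.Perm.sign σ : ℤ) : ZMod 2) = 1 := by
    intro σ
    rcases Int.units_eq_one_or (Equiv.Perm.sign σ) with h | h <;> rw [h] <;> decide
  have hprod : ∀ σ : Equiv.Perm (Fin n), ∏ i, M (σ⁻¹ i) i = ∏ i, M (σ i) i := by
    intro σ
    rw [← Equiv.prod_comp σ (fun i => M (σ⁻¹ i) i)]
    simp only [Equiv.Perm.inv_def, Equiv.symm_apply_apply]
    exact Finset.prod_congr rfl fun i _ => hsymm i (σ i)
  apply Finset.sum_involution (g := fun σ _ => σ⁻¹)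
  · intro σ _
    rw [hε, hε, one_mul, one_mul, hprod]
    exact CharTwo.add_self_eq_zero _
  · intro σ _ hne heq
    have hfp : ∀ i, σ i ≠ i := by
      intro i hi
      apply hne
      rw [hε, one_mul]
      exact Finset.prod_eq_zero (Finset.mem_univ i) (by rw [hi, hdiag])
    exact no_fpf_involution hn σ heq hfp
  · intro σ _; exact inv_inv σ
  · intro σ _; exact Finset.mem_univ _

lemma card_lt_pairs (n : ℕ) :
    (Finset.univ.filter fun p : Fin n × Fin n => p.1 < p.2).card = n * (n - 1) / 2 := by
  have hswap : (Finset.univ.filter fun p : Fin n × Fin n => p.1 < p.2).card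
      = (Finset.univ.filter fun p : Fin n × Fin n => p.2 < p.1).card := by
    apply Finset.card_nbij (fun p => p.swap)
    · intro p hp
      simp only [Finset.mem_filter, Finset.mem_univ, true_and] at *
      simpa using hp
    · intro p hp q hq h
      exact Prod.swap_injective h
    · intro p hp
      exact ⟨p.swap, by simpa using (by simpa using hp : p.2 < p.1), Prod.swap_swap p⟩
  have hunion : (Finset.univ.filter fun p : Fin n × Fin n => p.1 < p.2)
      ∪ (Finset.univ.filter fun p : Fin n × Fin n => p.2 < p.1)
      = (Finset.univ : Finset (Fin n)).offDiag := by
    ext p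
    simp only [Finset.mem_union, Finset.mem_filter, Finset.mem_univ, true_and,
      Finset.mem_offDiag]
    constructor
    · rintro (h | h)
      · exact ne_of_lt h
      · exact (ne_of_lt h).symm
    · intro h
      exact lt_or_gt_of_ne h
  have hcard := Finset.card_union_of_disjoint (s := Finset.univ.filter
      fun p : Fin n × Fin n => p.1 < p.2) (t := Finset.univ.filter
      fun p : Fin n × Fin n => p.2 < p.1) (by
    rw [Finset.disjoint_filter]
    intro p _ h1 h2
    exact absurd h1 (not_lt_of_gt h2))
  rw [hunion, Finset.offDiag_card, Finset.card_univ, Fintype.card_fin, ← hswap] at hcard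
  have hnn : n * n - n = n * (n - 1) := by
    cases n with
    | zero => rfl
    | succ k => rw [Nat.succ_sub_one, Nat.mul_succ, Nat.add_sub_cancel]
  rw [hnn] at hcard
  omega

theorem stmt19 {V W : Type*} [AddCommGroup V] [Module (ZMod 2) V]
    [AddCommGroup W] [Module (ZMod 2) W]
    [FiniteDimensional (ZMod 2) V] [FiniteDimensional (ZMod 2) W]
    [Nontrivial V]
    (φ : V →ₗ[ZMod 2] V →ₗ[ZMod 2] W)
    (halt : ∀ x : V, φ x x = 0)
    (hnondeg : ∀ x : V, x ≠ 0 → ∃ y : V, φ x y ≠ 0)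
    (hprim : Submodule.span (ZMod 2) {w : W | ∃ x y : V, w = φ x y} = ⊤) :
    1 + Module.finrank (ZMod 2) V % 2 ≤ Module.finrank (ZMod 2) W ∧
    Module.finrank (ZMod 2) W ≤
      Module.finrank (ZMod 2) V * (Module.finrank (ZMod 2) V - 1) / 2 := by
  classical
  set n := Module.finrank (ZMod 2) V with hn
  set d := Module.finrank (ZMod 2) W with hd
  have b : Module.Basis (Fin n) (ZMod 2) V := Module.finBasis (ZMod 2) V
  -- char-2 facts
  have h2 : ∀ w : W, w + w = 0 := by
    intro w
    calc w + w = (1 + 1 : ZMod 2) • w := by rw [add_smul, one_smul]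
      _ = (0 : ZMod 2) • w := by rw [show (1 + 1 : ZMod 2) = 0 from rfl]
      _ = 0 := zero_smul _ _
  have hsymm : ∀ x y : V, φ x y = φ y x := by
    intro x y
    have h := halt (x + y)
    simp only [map_add, LinearMap.add_apply, halt x, halt y, zero_add, add_zero] at h
    -- h : φ x y + φ y x = 0
    calc φ x y = (φ y x + φ y x) + φ x y := by rw [h2, zero_add]
      _ = φ y x + (φ y x + φ x y) := by rw [add_assoc]
      _ = φ y x := by rw [h, add_zero]
  -- lower bound 1 ≤ d
  have hWnontriv : Nontrivial W := by
    obtain ⟨x, hx⟩ := exists_ne (0 : V)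
    obtain ⟨y, hy⟩ := hnondeg x hx
    exact nontrivial_of_ne _ _ hy
  have hd1 : 1 ≤ d := hd ▸ Module.finrank_pos
  constructor
  · -- lower bound
    rcases Nat.even_or_odd n with he | ho
    · have : n % 2 = 0 := Nat.even_iff.1 he
      omega
    · have hodd : n % 2 = 1 := Nat.odd_iff.1 ho
      rw [hodd]
      by_contra hlt
      have hdeq : d = 1 := by omega
      -- build a bilinear form to ZMod 2
      have bw : Module.Basis (Fin 1) (ZMod 2) W :=
        Module.finBasisOfFinrankEq (ZMod 2) W (hd ▸ hdeq)
      set ψ : W →ₗ[ZMod 2] ZMod 2 := bw.coord 0 with hψdef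
      have hψ : ∀ w : W, ψ w = 0 → w = 0 := by
        intro w hw
        have := bw.sum_repr w
        rw [Fin.sum_univ_one] at this
        rw [← this]
        have : bw.repr w 0 = 0 := hw
        rw [this, zero_smul]
      set M : Matrix (Fin n) (Fin n) (ZMod 2) := fun i j => ψ (φ (b i) (b j)) with hM
      have hdet : M.det = 0 := by
        apply det_symm_zero_diag hodd
        · intro i j
          simp only [hM, hsymm (b i) (b j)]
        · intro i
          simp only [hM, halt, map_zero]
      obtain ⟨v, hv, hMv⟩ := (Matrix.exists_mulVec_eq_zero_iff.2 hdet)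
      set x : V := ∑ j, v j • b j with hx
      have hxne : x ≠ 0 := by
        intro hx0
        apply hv
        funext i
        have : b.repr x i = v i := by
          rw [hx]
          simp [Finset.sum_apply', Module.Basis.repr_self, Finsupp.single_apply]
        rw [hx0] at this
        simpa using this.symm
      -- φ x (b j) = 0 for all j
      have hxbj : ∀ j, φ x (b j) = 0 := by
        intro j
        apply hψ
        have : ψ (φ x (b j)) = ∑ i, v i * M i j := by
          rw [hx]
          simp only [map_sum, map_smul, LinearMap.sum_apply, LinearMap.smul_apply, hM]
          simp [smul_eq_mul]
        rw [this]
        have hmv := congrFun hMv j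
        rw [Matrix.mulVec, dotProduct] at hmv
        calc ∑ i, v i * M i j = ∑ i, M j i * v i := by
              refine Finset.sum_congr rfl fun i _ => ?_
              rw [mul_comm]
              congr 1
              simp only [hM, hsymm (b i) (b j)]
          _ = 0 := hmv
      obtain ⟨y, hy⟩ := hnondeg x hxne
      apply hy
      calc φ x y = φ x (∑ j, b.repr y j • b j) := by rw [b.sum_repr y]
        _ = ∑ j, b.repr y j • φ x (b j) := by simp only [map_sum, map_smul]
        _ = 0 := by simp [hxbj]
  · -- upper bound
    set s : Finset W := (Finset.univ.filter fun p : Fin n × Fin n => p.1 < p.2).image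
      (fun p => φ (b p.1) (b p.2)) with hs
    have hkey : ∀ i j : Fin n, φ (b i) (b j) ∈ Submodule.span (ZMod 2) (s : Set W) := by
      intro i j
      rcases lt_trichotomy i j with h | h | h
      · apply Submodule.subset_span
        exact Finset.mem_coe.2 (Finset.mem_image.2 ⟨(i, j), by simpa using h, rfl⟩)
      · rw [h, halt]
        exact Submodule.zero_mem _
      · rw [hsymm]
        apply Submodule.subset_span
        exact Finset.mem_coe.2 (Finset.mem_image.2 ⟨(j, i), by simpa using h, rfl⟩)
    have hspan : Submodule.span (ZMod 2) (s : Set W) = ⊤ := by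
      rw [← top_le_iff, ← hprim]
      rw [Submodule.span_le]
      rintro w ⟨x, y, rfl⟩
      have hexp : φ x y = ∑ i, ∑ j, b.repr x i • b.repr y j • φ (b i) (b j) := by
        conv_lhs => rw [← b.sum_repr x, ← b.sum_repr y]
        simp only [map_sum, map_smul, LinearMap.sum_apply, LinearMap.smul_apply,
          Finset.smul_sum]
        rw [Finset.sum_comm]
        exact Finset.sum_congr rfl fun i _ => Finset.sum_congr rfl fun j _ => smul_comm _ _ _
      rw [hexp]
      apply Submodule.sum_mem
      intro i _
      apply Submodule.sum_mem
      intro j _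
      exact Submodule.smul_mem _ _ (Submodule.smul_mem _ _ (hkey i j))
    calc d = Module.finrank (ZMod 2) (⊤ : Submodule (ZMod 2) W) := (finrank_top _ _).symm
      _ = Module.finrank (ZMod 2) (Submodule.span (ZMod 2) (s : Set W)) := by rw [hspan]
      _ ≤ s.card := finrank_span_finset_le_card s
      _ ≤ (Finset.univ.filter fun p : Fin n × Fin n => p.1 < p.2).card :=
          Finset.card_image_le
      _ = n * (n - 1) / 2 := card_lt_pairs n
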